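/- Let L be a continuous dcpo and A, B nonempty Scott compact saturated subsets of L. Then A is way below B in Q(L) (ordered by reverse inclusion) if and only if there is a finite subset F of L with B ⊆ int(↑F) and ↑F ⊆ A. -/

import Mathlib

open Set

variable {L : Type*} [CompletePartialOrder L] [TopologicalSpace L] [Topology.IsScott L Set.univ]

/-- The way-below relation in the dcpo `L`. -/
def wayBelow (x y : L) : Prop :=
  ∀ d : Set L, d.Nonempty → DirectedOn (· ≤ ·) d → y ≤ sSup d → ∃ z ∈ d, x ≤ z

/-- `L` is a continuous dcpo: every element is the directed supremum of the elements
way below it. -/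
def ContinuousDcpo (L : Type*) [CompletePartialOrder L] : Prop :=
  ∀ x : L, {y : L | wayBelow y x}.Nonempty ∧
    DirectedOn (· ≤ ·) {y : L | wayBelow y x} ∧ IsLUB {y : L | wayBelow y x} x

/-- `K` is saturated: it is the intersection of its open neighborhoods. -/
def Saturated (K : Set L) : Prop := K = ⋂₀ {U : Set L | IsOpen U ∧ K ⊆ U}

/-- `Q(L)`: the nonempty Scott compact saturated subsets of `L`. -/
def QLset (L : Type*) [CompletePartialOrder L] [TopologicalSpace L] : Set (Set L) :=
  {K : Set L | K.Nonempty ∧ IsCompact K ∧ Saturated K}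

/-- The way-below relation in `Q(L)` ordered by reverse inclusion (where directed suprema
are intersections): `A ≪ B` iff every directed family whose supremum is above `B`
contains an element above `A`. -/
def wayBelowQ (A B : Set L) : Prop :=
  ∀ 𝒢 ⊆ QLset L, 𝒢.Nonempty → DirectedOn (fun K K' : Set L => K' ⊆ K) 𝒢 →
    ⋂₀ 𝒢 ⊆ B → ∃ K ∈ 𝒢, K ⊆ A

section Aux

lemma wayBelow_le {x y : L} (h : wayBelow x y) : x ≤ y := by
  obtain ⟨z, hz, hxz⟩ := h {y} ⟨y, rfl⟩ (directedOn_singleton y)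
    ((CompletePartialOrder.lubOfDirected {y} (directedOn_singleton y)).1 rfl)
  cases hz; exact hxz

lemma wayBelow_mono_left {x' x y : L} (hx : x' ≤ x) (h : wayBelow x y) : wayBelow x' y := by
  intro d hd1 hd2 hd3
  obtain ⟨z, hz, hxz⟩ := h d hd1 hd2 hd3
  exact ⟨z, hz, hx.trans hxz⟩

lemma wayBelow_mono_right {x y y' : L} (h : wayBelow x y) (hy : y ≤ y') : wayBelow x y' := by
  intro d hd1 hd2 hd3
  exact h d hd1 hd2 (hy.trans hd3)

lemma interpolation (hcont : ContinuousDcpo L) {w x : L} (hwx : wayBelow w x) :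
    ∃ u, wayBelow w u ∧ wayBelow u x := by
  set E : Set L := {a | ∃ b, wayBelow a b ∧ wayBelow b x} with hE
  obtain ⟨hne, hdir, hlub⟩ := hcont x
  -- E nonempty
  obtain ⟨b, hb⟩ := hne
  obtain ⟨a, ha⟩ := (hcont b).1
  have hEne : E.Nonempty := ⟨a, b, ha, hb⟩
  -- E directed
  have hEdir : DirectedOn (· ≤ ·) E := by
    rintro a₁ ⟨b₁, hab₁, hbx₁⟩ a₂ ⟨b₂, hab₂, hbx₂⟩
    obtain ⟨b₃, hb₃, h13, h23⟩ := hdir b₁ hbx₁ b₂ hbx₂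
    obtain ⟨a₃, ha₃, ha13, ha23⟩ := (hcont b₃).2.1 a₁ (wayBelow_mono_right hab₁ h13)
      a₂ (wayBelow_mono_right hab₂ h23)
    exact ⟨a₃, ⟨b₃, ha₃, hb₃⟩, ha13, ha23⟩
  -- IsLUB E x
  have hub : x ∈ upperBounds E := by
    rintro a ⟨b, hab, hbx⟩
    exact (wayBelow_le hab).trans (wayBelow_le hbx)
  have hElub : IsLUB E x := by
    refine ⟨hub, fun u hu => ?_⟩
    refine hlub.2 fun b hbx => ?_
    refine (hcont b).2.2.2 fun a hab => ?_
    exact hu ⟨b, hab, hbx⟩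
  have hxle : x ≤ sSup E :=
    hElub.2 (CompletePartialOrder.lubOfDirected E hEdir).1
  obtain ⟨a, haE, hwa⟩ := hwx E hEne hEdir hxle
  obtain ⟨b, hab, hbx⟩ := haE
  exact ⟨b, wayBelow_mono_left hwa hab, hbx⟩

lemma isOpen_wayBelowSet (hcont : ContinuousDcpo L) (w : L) :
    IsOpen {y : L | wayBelow w y} := by
  rw [Topology.IsScott.isOpen_iff_isUpperSet_and_dirSupInaccOn (D := univ)]
  constructor
  · intro y z hyz hy
    exact wayBelow_mono_right hy hyz
  · intro d _ hd1 hd2 a hlub ha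
    obtain ⟨u, hwu, hux⟩ := interpolation hcont ha
    have hale : a ≤ sSup d := hlub.2 (CompletePartialOrder.lubOfDirected d hd2).1
    obtain ⟨z, hz, huz⟩ := hux d hd1 hd2 hale
    exact ⟨z, hz, wayBelow_mono_right hwu huz⟩

lemma exists_wayBelow_mem (hcont : ContinuousDcpo L) {U : Set L} (hU : IsOpen U) {x : L}
    (hx : x ∈ U) : ∃ w ∈ U, wayBelow w x := by
  obtain ⟨hne, hdir, hlub⟩ := hcont x
  rw [Topology.IsScott.isOpen_iff_isUpperSet_and_dirSupInaccOn (D := univ)] at hU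
  obtain ⟨w, hw1, hw2⟩ := hU.2 (mem_univ _) hne hdir hlub hx
  exact ⟨w, hw2, hw1⟩

lemma isUpperSet_upF (F : Finset L) : IsUpperSet {x : L | ∃ a ∈ F, a ≤ x} := by
  rintro x y hxy ⟨a, haF, hax⟩
  exact ⟨a, haF, hax.trans hxy⟩

lemma isCompact_Ici' (a : L) : IsCompact (Ici a) := by
  refine isCompact_of_finite_subcover fun U hUo hcov => ?_
  obtain ⟨i, hi⟩ := mem_iUnion.1 (hcov (mem_Ici.2 le_rfl))
  refine ⟨{i}, fun x hx => ?_⟩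
  simp only [Finset.mem_singleton, iUnion_iUnion_eq_left]
  exact Topology.IsScott.isUpperSet_of_isOpen (D := univ) (hUo i) hx hi

lemma isCompact_upF (F : Finset L) : IsCompact {x : L | ∃ a ∈ F, a ≤ x} := by
  have : {x : L | ∃ a ∈ F, a ≤ x} = ⋃ a ∈ (F : Set L), Ici a := by
    ext x; simp [Ici]
  rw [this]
  exact (F : Set L).toFinite.isCompact_biUnion fun a _ => isCompact_Ici' a

lemma saturated_of_isUpperSet {K : Set L} (h : IsUpperSet K) : Saturated K := by
  apply subset_antisymm
  · intro x hx U hU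
    exact hU.2 hx
  · intro x hx
    by_contra hxK
    have hKU : K ⊆ (Iic x)ᶜ := by
      intro k hk hkx
      exact hxK (h hkx hk)
    have := hx ((Iic x)ᶜ) ⟨(isClosed_Iic (a := x)).isOpen_compl, hKU⟩
    exact this (mem_Iic.2 le_rfl)

lemma isUpperSet_of_saturated {K : Set L} (h : Saturated K) : IsUpperSet K := by
  rw [h]
  intro x y hxy hx U hU
  exact Topology.IsScott.isUpperSet_of_isOpen (D := univ) hU.1 hxy (hx U hU)

/-- The covering lemma: a compact subset of an open set admits a finite set `F` inside the
open set whose upper set has interior containing the compact set. -/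
lemma cover_lemma (hcont : ContinuousDcpo L) {K U : Set L} (hK : IsCompact K)
    (hU : IsOpen U) (hKU : K ⊆ U) :
    ∃ F : Finset L, (F : Set L) ⊆ U ∧ K ⊆ interior {x : L | ∃ a ∈ F, a ≤ x} := by
  classical
  have hch : ∀ k : L, k ∈ K → ∃ w ∈ U, wayBelow w k := fun k hk =>
    exists_wayBelow_mem hcont hU (hKU hk)
  choose w hwU hwk using hch
  let V : K → Set L := fun k => {y : L | wayBelow (w k k.2) y}
  have hVo : ∀ k : K, IsOpen (V k) := fun k => isOpen_wayBelowSet hcont _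
  have hcov : K ⊆ ⋃ k : K, V k := fun x hx =>
    mem_iUnion.2 ⟨⟨x, hx⟩, hwk x hx⟩
  obtain ⟨t, ht⟩ := hK.elim_finite_subcover V hVo hcov
  refine ⟨t.image (fun k => w k.1 k.2), ?_, ?_⟩
  · intro a ha
    simp only [Finset.coe_image, mem_image] at ha
    obtain ⟨k, _, rfl⟩ := ha
    exact hwU _ _
  · refine ht.trans (interior_maximal ?_ (isOpen_biUnion fun i _ => hVo i))
    intro y hy
    obtain ⟨k, hkt, hky⟩ := mem_iUnion₂.1 hy
    exact ⟨w k.1 k.2, Finset.mem_image_of_mem _ hkt, wayBelow_le hky⟩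

/-- Sobriety of the Scott space of a continuous dcpo. -/
lemma sober (hcont : ContinuousDcpo L) {C : Set L} (hC : IsClosed C) (hCne : C.Nonempty)
    (hirr : ∀ U V : Set L, IsOpen U → IsOpen V → (C ∩ U).Nonempty → (C ∩ V).Nonempty →
      (C ∩ (U ∩ V)).Nonempty) : ∃ x, C = Iic x := by
  obtain ⟨hClow, hCd⟩ := Topology.IsScott.isClosed_iff_isLowerSet_and_dirSupClosed.1 hC
  set D : Set L := {v | ∃ c ∈ C, wayBelow v c} with hD
  obtain ⟨c₀, hc₀⟩ := hCne
  obtain ⟨v₀, hv₀⟩ := (hcont c₀).1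
  have hDne : D.Nonempty := ⟨v₀, c₀, hc₀, hv₀⟩
  have hDdir : DirectedOn (· ≤ ·) D := by
    rintro v₁ ⟨c₁, hc₁, hv₁⟩ v₂ ⟨c₂, hc₂, hv₂⟩
    obtain ⟨c, hcC, hc12⟩ := hirr _ _ (isOpen_wayBelowSet hcont v₁) (isOpen_wayBelowSet hcont v₂)
      ⟨c₁, hc₁, hv₁⟩ ⟨c₂, hc₂, hv₂⟩
    obtain ⟨v₃, hv₃, h13, h23⟩ := (hcont c).2.1 v₁ hc12.1 v₂ hc12.2
    exact ⟨v₃, ⟨c, hcC, hv₃⟩, h13, h23⟩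
  have hlub : IsLUB D (sSup D) := CompletePartialOrder.lubOfDirected D hDdir
  have hDC : D ⊆ C := by
    rintro v ⟨c, hcC, hvc⟩
    exact hClow (wayBelow_le hvc) hcC
  have hxC : sSup D ∈ C := hCd hDC hDne hDdir hlub
  refine ⟨sSup D, subset_antisymm ?_ fun y hy => hClow hy hxC⟩
  intro c hcC
  have hsub : {v : L | wayBelow v c} ⊆ D := fun v hv => ⟨c, hcC, hv⟩
  exact (hcont c).2.2.2 fun v hv => hlub.1 (hsub hv)

/-- The Hofmann–Mislove property (well-filteredness). -/
lemma wellFiltered (hcont : ContinuousDcpo L) (𝒢 : Set (Set L)) (h𝒢 : 𝒢 ⊆ QLset L)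
    (hne : 𝒢.Nonempty) (hdir : DirectedOn (fun K K' : Set L => K' ⊆ K) 𝒢)
    {U : Set L} (hU : IsOpen U) (hsub : ⋂₀ 𝒢 ⊆ U) : ∃ K ∈ 𝒢, K ⊆ U := by
  by_contra hcon
  push_neg at hcon
  set 𝒲 : Set (Set L) := {W | IsOpen W ∧ U ⊆ W ∧ ∀ K ∈ 𝒢, ¬ K ⊆ W} with h𝒲
  have hU𝒲 : U ∈ 𝒲 := ⟨hU, Subset.rfl, fun K hK => hcon K hK⟩
  obtain ⟨W, hUW, hWmax⟩ := zorn_subset_nonempty 𝒲 (fun c hc hchain hcne => by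
    refine ⟨⋃₀ c, ⟨isOpen_sUnion fun W hW => (hc hW).1, ?_, ?_⟩, fun s hs => subset_sUnion_of_mem hs⟩
    · obtain ⟨W₀, hW₀⟩ := hcne
      exact (hc hW₀).2.1.trans (subset_sUnion_of_mem hW₀)
    · intro K hK hKsub
      have hKne : K.Nonempty := (h𝒢 hK).1
      have : Nonempty c := ⟨⟨_, hcne.choose_spec⟩⟩
      obtain ⟨⟨W₁, hW₁⟩, hKW₁⟩ := (h𝒢 hK).2.1.elim_directed_cover (fun W : c => (W : Set L))
        (fun W => (hc W.2).1) (by rwa [← sUnion_eq_iUnion])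
        ((hchain.directedOn).directed_val)
      exact (hc hW₁).2.2 K hK hKW₁) U hU𝒲
  obtain ⟨hWo, hUWs, hWK⟩ := hWmax.1
  -- Wᶜ is nonempty closed irreducible
  obtain ⟨K₀, hK₀⟩ := hne
  obtain ⟨k₀, hk₀K, hk₀W⟩ := not_subset.1 (hWK K₀ hK₀)
  have hcompl : ∀ V : Set L, IsOpen V → (Wᶜ ∩ V).Nonempty → ∃ K ∈ 𝒢, K ⊆ W ∪ V := by
    intro V hV hVne
    by_contra hc2
    push_neg at hc2
    have hmem : W ∪ V ∈ 𝒲 := ⟨hWo.union hV, hUWs.trans subset_union_left, hc2⟩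
    have := hWmax.2 hmem subset_union_left
    obtain ⟨x, hxW, hxV⟩ := hVne
    exact hxW (this (Or.inr hxV))
  have hirr : ∀ U' V : Set L, IsOpen U' → IsOpen V → (Wᶜ ∩ U').Nonempty →
      (Wᶜ ∩ V).Nonempty → (Wᶜ ∩ (U' ∩ V)).Nonempty := by
    intro U' V hU' hV h1 h2
    by_contra h3
    obtain ⟨K₁, hK₁𝒢, hK₁⟩ := hcompl U' hU' h1
    obtain ⟨K₂, hK₂𝒢, hK₂⟩ := hcompl V hV h2
    obtain ⟨K, hK𝒢, hKs1, hKs2⟩ := hdir K₁ hK₁𝒢 K₂ hK₂𝒢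
    refine hWK K hK𝒢 fun x hx => ?_
    rcases hK₁ (hKs1 hx) with hxW | hxU'
    · exact hxW
    rcases hK₂ (hKs2 hx) with hxW | hxV
    · exact hxW
    by_contra hxW
    exact h3 ⟨x, hxW, hxU', hxV⟩
  obtain ⟨x, hx⟩ := sober hcont hWo.isClosed_compl ⟨k₀, hk₀W⟩ hirr
  have hxW : x ∉ W := by
    have hxx : x ∈ Iic x := mem_Iic.2 le_rfl
    rw [← hx] at hxx
    exact hxx
  have hxU : x ∉ U := fun h => hxW (hUWs h)
  have hxint : x ∈ ⋂₀ 𝒢 := by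
    intro K hK
    obtain ⟨k, hkK, hkW⟩ := not_subset.1 (hWK K hK)
    have hkx : k ≤ x := by
      have hkc : k ∈ Wᶜ := hkW
      rw [hx] at hkc
      exact hkc
    exact isUpperSet_of_saturated (h𝒢 hK).2.2 hkx hkK
  exact hxU (hsub hxint)

end Aux

/-- In `Q(L)` over a continuous dcpo `L`, `A ≪ B` iff there is a finite `F ⊆ L` with
`B ⊆ int(↑F)` and `↑F ⊆ A`. -/
theorem stmt_18 (hcont : ContinuousDcpo L) (A B : Set L)
    (hA : A ∈ QLset L) (hB : B ∈ QLset L) :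
    wayBelowQ A B ↔ ∃ F : Finset L,
      B ⊆ interior {x : L | ∃ a ∈ F, a ≤ x} ∧ {x : L | ∃ a ∈ F, a ≤ x} ⊆ A := by
  obtain ⟨hBne, hBc, hBsat⟩ := hB
  constructor
  · intro h
    set 𝒢 : Set (Set L) :=
      {S | ∃ F : Finset L, S = {x : L | ∃ a ∈ F, a ≤ x} ∧ B ⊆ interior S} with h𝒢
    have h𝒢Q : 𝒢 ⊆ QLset L := by
      rintro S ⟨F, rfl, hBS⟩
      exact ⟨hBne.imp fun b hb => interior_subset (hBS hb), isCompact_upF F,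
        saturated_of_isUpperSet (isUpperSet_upF F)⟩
    have h𝒢ne : 𝒢.Nonempty := by
      obtain ⟨F, _, hF2⟩ := cover_lemma hcont hBc isOpen_univ (subset_univ B)
      exact ⟨_, F, rfl, hF2⟩
    have h𝒢dir : DirectedOn (fun K K' : Set L => K' ⊆ K) 𝒢 := by
      rintro S₁ ⟨F₁, rfl, h1⟩ S₂ ⟨F₂, rfl, h2⟩
      have hBV : B ⊆ interior {x : L | ∃ a ∈ F₁, a ≤ x} ∩ interior {x : L | ∃ a ∈ F₂, a ≤ x} :=
        subset_inter h1 h2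
      obtain ⟨F, hF1, hF2⟩ := cover_lemma hcont hBc (isOpen_interior.inter isOpen_interior) hBV
      refine ⟨_, ⟨F, rfl, hF2⟩, ?_, ?_⟩
      · rintro x ⟨a, haF, hax⟩
        exact isUpperSet_upF F₁ hax (interior_subset (hF1 haF).1)
      · rintro x ⟨a, haF, hax⟩
        exact isUpperSet_upF F₂ hax (interior_subset (hF1 haF).2)
    have hint : ⋂₀ 𝒢 ⊆ B := by
      intro x hx
      rw [hBsat]
      rintro U ⟨hUo, hBU⟩
      obtain ⟨F, hF1, hF2⟩ := cover_lemma hcont hBc hUo hBU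
      have hxF : x ∈ {y : L | ∃ a ∈ F, a ≤ y} := hx _ ⟨F, rfl, hF2⟩
      obtain ⟨a, haF, hax⟩ := hxF
      exact Topology.IsScott.isUpperSet_of_isOpen (D := univ) hUo hax (hF1 haF)
    obtain ⟨K, hK𝒢, hKA⟩ := h 𝒢 h𝒢Q h𝒢ne h𝒢dir hint
    obtain ⟨F, rfl, hBF⟩ := hK𝒢
    exact ⟨F, hBF, hKA⟩
  · rintro ⟨F, hBF, hFA⟩
    intro 𝒢 h𝒢 hne hdir hsub
    obtain ⟨K, hK𝒢, hKU⟩ := wellFiltered hcont 𝒢 h𝒢 hne hdir isOpen_interior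
      (hsub.trans hBF)
    exact ⟨K, hK𝒢, hKU.trans (interior_subset.trans hFA)⟩
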